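/- For any fixed δ ≥ 1, there are only finitely many templates Γ with cogenus δ(Γ) = δ. -/
import Mathlib


/-- A template: a directed graph on vertices `{0, ..., l}` (`l ≥ 1`), possibly with
multiple edges, recorded as a multiset of triples `(i, j, w)` meaning an edge `i → j`
of weight `w`, such that `i < j`, `j ≤ l`, `w > 0`, every edge between consecutive
vertices has weight at least 2, and every intermediate vertex is covered by an edge. -/
structure Template where
  l : ℕ
  edges : Multiset (ℕ × ℕ × ℕ)
  one_le_l : 1 ≤ l
  lt_of_mem : ∀ e ∈ edges, e.1 < e.2.1
  le_l : ∀ e ∈ edges, e.2.1 ≤ l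
  w_pos : ∀ e ∈ edges, 0 < e.2.2
  short_two : ∀ e ∈ edges, e.2.1 = e.1 + 1 → 2 ≤ e.2.2
  covered : ∀ j, 1 ≤ j → j + 1 ≤ l → ∃ e ∈ edges, e.1 < j ∧ j < e.2.1

/-- The cogenus `δ(Γ) = ∑_{edges i→j} ((j−i)·w(e) − 1)`. -/
def Template.cogenus (Γ : Template) : ℕ :=
  (Γ.edges.map (fun e => (e.2.1 - e.1) * e.2.2 - 1)).sum

/-- `κ_j(Γ)`: the sum of the weights of edges `i → k` with `i < j ≤ k`. -/
def Template.kappa (Γ : Template) (j : ℕ) : ℕ :=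
  ((Γ.edges.filter (fun e => e.1 < j ∧ j ≤ e.2.1)).map (fun e => e.2.2)).sum

/-- The multiplicity `μ(Γ) = ∏_e w(e)²`. -/
def Template.mult (Γ : Template) : ℕ :=
  (Γ.edges.map (fun e => e.2.2 ^ 2)).prod

private lemma multiset_sum_le_of_le {s t : Multiset ℕ} (h : s ≤ t) : s.sum ≤ t.sum := by
  obtain ⟨u, rfl⟩ := Multiset.le_iff_exists_add.mp h
  simp

private lemma card_le_cogenus (Γ : Template) : Multiset.card Γ.edges ≤ Γ.cogenus := by
  have h : ∀ e ∈ Γ.edges.map (fun e => (e.2.1 - e.1) * e.2.2 - 1), 1 ≤ e := by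
    intro x hx
    obtain ⟨e, he, rfl⟩ := Multiset.mem_map.mp hx
    rcases Nat.lt_or_ge (e.2.1) (e.1 + 2) with h1 | h2
    · have hlt := Γ.lt_of_mem e he
      have : e.2.1 = e.1 + 1 := by omega
      have hw := Γ.short_two e he this
      rw [this]
      have : e.1 + 1 - e.1 = 1 := by omega
      rw [this]
      omega
    · have hw := Γ.w_pos e he
      have : 2 ≤ e.2.1 - e.1 := by omega
      have : 2 ≤ (e.2.1 - e.1) * e.2.2 := le_trans this (Nat.le_mul_of_pos_right _ hw)
      omega
  have := Multiset.card_nsmul_le_sum h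
  simpa [Template.cogenus] using this

private lemma l_le_cogenus (Γ : Template) : Γ.l ≤ Γ.cogenus + 1 := by
  classical
  have hsub : Finset.Ico 1 Γ.l ⊆ Γ.edges.toFinset.biUnion (fun e => Finset.Ioo e.1 e.2.1) := by
    intro j hj
    rw [Finset.mem_Ico] at hj
    obtain ⟨e, he, h1, h2⟩ := Γ.covered j hj.1 (by omega)
    exact Finset.mem_biUnion.mpr ⟨e, Multiset.mem_toFinset.mpr he, Finset.mem_Ioo.mpr ⟨h1, h2⟩⟩
  have h1 : Γ.l - 1 ≤ ∑ e ∈ Γ.edges.toFinset, (Finset.Ioo e.1 e.2.1).card := by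
    calc Γ.l - 1 = (Finset.Ico 1 Γ.l).card := by rw [Nat.card_Ico]
    _ ≤ _ := le_trans (Finset.card_le_card hsub) (Finset.card_biUnion_le)
  have h2 : ∑ e ∈ Γ.edges.toFinset, (Finset.Ioo e.1 e.2.1).card
      = (Γ.edges.dedup.map (fun e => e.2.1 - e.1 - 1)).sum := by
    rw [Finset.sum]
    rw [Multiset.toFinset_val]
    congr 1
    exact Multiset.map_congr rfl (fun e _ => Nat.card_Ioo _ _)
  have h3 : (Γ.edges.dedup.map (fun e => e.2.1 - e.1 - 1)).sum
      ≤ (Γ.edges.map (fun e => e.2.1 - e.1 - 1)).sum :=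
    multiset_sum_le_of_le (Multiset.map_le_map (Multiset.dedup_le _))
  have h4 : (Γ.edges.map (fun e => e.2.1 - e.1 - 1)).sum ≤ Γ.cogenus := by
    apply Multiset.sum_map_le_sum_map
    intro e he
    have hw := Γ.w_pos e he
    have : e.2.1 - e.1 ≤ (e.2.1 - e.1) * e.2.2 := Nat.le_mul_of_pos_right _ hw
    omega
  have := Γ.one_le_l
  omega

/-- For any fixed `δ ≥ 1`, there are only finitely many templates of cogenus `δ`. -/
theorem finitely_many_templates (δ : ℕ) (hδ : 1 ≤ δ) :
    {Γ : Template | Γ.cogenus = δ}.Finite := by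
  classical
  set M : Multiset (ℕ × ℕ × ℕ) :=
    δ • ((Finset.range (δ + 2)) ×ˢ (Finset.range (δ + 2)) ×ˢ (Finset.range (δ + 2))).val with hM
  have hφ : Set.InjOn (fun Γ : Template => (Γ.l, Γ.edges))
      ((fun Γ : Template => (Γ.l, Γ.edges)) ⁻¹' {p | p.1 ≤ δ + 1 ∧ p.2 ∈ M.powerset}) := by
    intro Γ₁ _ Γ₂ _ h
    cases Γ₁; cases Γ₂
    simp_all
  have hpow : ({m : Multiset (ℕ × ℕ × ℕ) | m ∈ M.powerset}).Finite :=
    Set.Finite.ofFinset M.powerset.toFinset (fun x => by simp)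
  have hfin : ({p : ℕ × Multiset (ℕ × ℕ × ℕ) | p.1 ≤ δ + 1 ∧ p.2 ∈ M.powerset}).Finite := by
    apply Set.Finite.subset (Set.Finite.prod (Set.finite_Icc 0 (δ + 1)) hpow)
    intro p hp
    exact ⟨Set.mem_Icc.mpr ⟨Nat.zero_le _, hp.1⟩, by simpa using hp.2⟩
  apply Set.Finite.subset (Set.Finite.preimage hφ hfin)
  intro Γ hΓ
  simp only [Set.mem_setOf_eq] at hΓ
  constructor
  · rw [← hΓ]; exact l_le_cogenus Γ
  · rw [Multiset.mem_powerset, Multiset.le_iff_count]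
    intro e
    by_cases he : e ∈ Γ.edges
    · have hterm : (e.2.1 - e.1) * e.2.2 - 1 ≤ δ := by
        rw [← hΓ]
        exact Multiset.single_le_sum (fun x _ => Nat.zero_le x)
          _ (Multiset.mem_map_of_mem _ he)
      have hw := Γ.w_pos e he
      have hlt := Γ.lt_of_mem e he
      have hle := Γ.le_l e he
      have hl := l_le_cogenus Γ
      rw [hΓ] at hl
      have hd : 1 ≤ e.2.1 - e.1 := by omega
      have hwb : e.2.2 ≤ δ + 1 := by
        have := Nat.le_mul_of_pos_left e.2.2 (show 0 < e.2.1 - e.1 by omega)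
        omega
      have hmem : e ∈ ((Finset.range (δ + 2)) ×ˢ (Finset.range (δ + 2)) ×ˢ
          (Finset.range (δ + 2))).val := by
        rw [Finset.mem_val, Finset.mem_product, Finset.mem_product]
        refine ⟨Finset.mem_range.mpr ?_, Finset.mem_range.mpr ?_, Finset.mem_range.mpr ?_⟩ <;> omega
      calc Multiset.count e Γ.edges ≤ Multiset.card Γ.edges := Multiset.count_le_card _ _
        _ ≤ δ := by rw [← hΓ]; exact card_le_cogenus Γ
        _ = δ * 1 := (Nat.mul_one δ).symm
        _ ≤ M.count e := by
          rw [hM, Multiset.count_nsmul]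
          exact Nat.mul_le_mul_left δ (Multiset.one_le_count_iff_mem.mpr hmem)
    · simp [Multiset.count_eq_zero_of_notMem he]
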